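/- Let (X, d) be a complete metric space, let u : X → ℝ be upper semicontinuous and bounded from above, and let ε > 0, δ > 0. If x̄ ∈ X satisfies u(x̄) > sup_X u − ε, then there exists a point x ∈ X such that u(x) ≥ u(x̄), d(x, x̄) ≤ δ, and u(y) ≤ u(x) + (ε/δ) · d(x, y) for every y ∈ X. -/
import Mathlib

/-- Localized Ekeland variational principle (maximization form): on a complete metric space,
given an upper semicontinuous function `u` bounded from above, `ε, δ > 0` and a point `x̄`
with `u x̄ > sup u - ε`, there is a point `x` with `u x ≥ u x̄`, `d(x, x̄) ≤ δ`, and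
`u y ≤ u x + (ε/δ) d(x, y)` for all `y`. -/
theorem ekeland_principle_localized {X : Type*} [MetricSpace X] [CompleteSpace X]
    (u : X → ℝ) (hu : UpperSemicontinuous u) (hbdd : BddAbove (Set.range u))
    (ε δ : ℝ) (hε : 0 < ε) (hδ : 0 < δ)
    (xbar : X) (hxbar : (⨆ y, u y) - ε < u xbar) :
    ∃ x : X, u xbar ≤ u x ∧ dist x xbar ≤ δ ∧
      ∀ y : X, u y ≤ u x + (ε / δ) * dist x y := by
  set lam : ℝ := ε / δ with hlamdef
  have hlam0 : 0 < lam := div_pos hε hδ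
  set S : X → Set X := fun p => {y | u p + lam * dist p y ≤ u y} with hSdef
  have hmem : ∀ p, p ∈ S p := by intro p; simp [hSdef]
  have hSne : ∀ p, (u '' S p).Nonempty := fun p => ⟨u p, p, hmem p, rfl⟩
  have hSbdd : ∀ p, BddAbove (u '' S p) :=
    fun p => hbdd.mono (Set.image_subset_range u (S p))
  -- transitivity: the sets are nested along the order
  have htrans : ∀ p q, q ∈ S p → S q ⊆ S p := by
    intro p q hq y hy
    have h1 : u p + lam * dist p q ≤ u q := hq
    have h2 : u q + lam * dist q y ≤ u y := hy
    have htri : dist p y ≤ dist p q + dist q y := dist_triangle p q y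
    have : u p + lam * dist p y ≤ u p + lam * (dist p q + dist q y) := by
      nlinarith [hlam0.le]
    simp only [hSdef, Set.mem_setOf_eq]
    nlinarith
  -- each S p is closed
  have hSclosed : ∀ p, IsClosed (S p) := by
    intro p
    have husc : UpperSemicontinuous (fun y => u y + (-lam) * dist p y) := by
      apply hu.add
      exact ((continuous_const.mul (continuous_const.dist continuous_id)).upperSemicontinuous)
    have : S p = ((fun y => u y + (-lam) * dist p y) ⁻¹' Set.Iio (u p))ᶜ := by
      ext y
      simp only [hSdef, Set.mem_setOf_eq, Set.mem_compl_iff, Set.mem_preimage, Set.mem_Iio,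
        not_lt]
      constructor <;> intro h <;> linarith
    rw [this]
    exact (husc.isOpen_preimage (u p)).isClosed_compl
  -- choice of almost-maximizers
  have hchoice : ∀ p (n : ℕ), ∃ q, q ∈ S p ∧ sSup (u '' S p) - 1 / (n + 1) < u q := by
    intro p n
    have hpos : (0 : ℝ) < 1 / (n + 1) := by positivity
    obtain ⟨a, ha, hlt⟩ := exists_lt_of_lt_csSup (hSne p)
      (sub_lt_self (sSup (u '' S p)) hpos)
    obtain ⟨q, hq, rfl⟩ := ha
    exact ⟨q, hq, hlt⟩
  -- iterative sequence
  set seq : ℕ → X := fun n => Nat.rec xbar (fun n p => (hchoice p n).choose) n with hseqdef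
  have hseq0 : seq 0 = xbar := rfl
  have hseq_succ : ∀ n, seq (n + 1) ∈ S (seq n) ∧
      sSup (u '' S (seq n)) - 1 / (n + 1) < u (seq (n + 1)) := by
    intro n
    exact (hchoice (seq n) n).choose_spec
  have hstep : ∀ n, u (seq n) + lam * dist (seq n) (seq (n + 1)) ≤ u (seq (n + 1)) :=
    fun n => (hseq_succ n).1
  have humono : Monotone fun n => u (seq n) := by
    apply monotone_nat_of_le_succ
    intro n
    have := hstep n
    nlinarith [dist_nonneg (x := seq n) (y := seq (n + 1)), hlam0.le]
  have hubdd : BddAbove (Set.range fun n => u (seq n)) :=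
    hbdd.mono (by rintro _ ⟨n, rfl⟩; exact ⟨seq n, rfl⟩)
  -- nestedness: seq m ∈ S (seq n) for n ≤ m
  have hnest : ∀ n m, n ≤ m → seq m ∈ S (seq n) := by
    intro n m hnm
    induction m with
    | zero => simpa [Nat.le_zero.mp hnm] using hmem (seq 0)
    | succ m ih =>
      rcases Nat.lt_or_ge n (m + 1) with h | h
      · have hn : n ≤ m := Nat.lt_succ_iff.mp h
        exact htrans (seq n) (seq m) (ih hn) (hseq_succ m).1
      · have : n = m + 1 := le_antisymm hnm h
        subst this; exact hmem _
  -- the limit L of u ∘ seq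
  set L : ℝ := ⨆ n, u (seq n) with hLdef
  have hLtendsto : Filter.Tendsto (fun n => u (seq n)) Filter.atTop (nhds L) :=
    tendsto_atTop_ciSup humono hubdd
  have huL : ∀ n, u (seq n) ≤ L := fun n => le_ciSup hubdd n
  -- distance bound: lam * d(seq n, seq m) ≤ u(seq m) - u(seq n) for n ≤ m
  have hdistle : ∀ n m, n ≤ m → lam * dist (seq n) (seq m) ≤ u (seq m) - u (seq n) := by
    intro n m hnm
    have := hnest n m hnm
    simp only [hSdef, Set.mem_setOf_eq] at this
    linarith
  -- Cauchy
  have hcauchy : CauchySeq seq := by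
    apply cauchySeq_of_le_tendsto_0' (fun n => (L - u (seq n)) / lam)
    · intro n m hnm
      have h1 := hdistle n m hnm
      have h2 := huL m
      rw [le_div_iff₀ hlam0]
      nlinarith
    · have : Filter.Tendsto (fun n => (L - u (seq n)) / lam) Filter.atTop
          (nhds ((L - L) / lam)) :=
        ((tendsto_const_nhds.sub hLtendsto).div_const lam)
      simpa using this
  obtain ⟨x, hx⟩ := cauchySeq_tendsto_of_complete hcauchy
  -- x ∈ S (seq n) for all n
  have hxS : ∀ n, x ∈ S (seq n) := by
    intro n
    apply (hSclosed (seq n)).mem_of_tendsto hx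
    filter_upwards [Filter.eventually_ge_atTop n] with m hm
    exact hnest n m hm
  have hxS' : ∀ n, u (seq n) + lam * dist (seq n) x ≤ u x := fun n => hxS n
  have hux : ∀ n, u (seq n) ≤ u x := by
    intro n
    have := hxS' n
    nlinarith [dist_nonneg (x := seq n) (y := x), hlam0.le]
  refine ⟨x, ?_, ?_, ?_⟩
  · have := hxS' 0
    rw [hseq0] at this
    nlinarith [dist_nonneg (x := xbar) (y := x), hlam0.le]
  · -- dist x xbar ≤ δ
    have h0 := hxS' 0
    rw [hseq0] at h0
    have hxle : u x ≤ ⨆ y, u y := le_ciSup hbdd x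
    have : lam * dist xbar x < ε := by linarith
    have hd : dist xbar x < ε / lam := by
      rw [lt_div_iff₀ hlam0]; linarith [this]
    have : ε / lam = δ := by
      rw [hlamdef]; field_simp
    rw [dist_comm]
    linarith [hd, this.le, this.ge]
  · -- the key inequality
    intro y
    by_contra hcon
    push_neg at hcon
    -- y ∈ S (seq n) for all n
    have hyS : ∀ n, y ∈ S (seq n) := by
      intro n
      have h1 := hxS' n
      have htri : dist (seq n) y ≤ dist (seq n) x + dist x y := dist_triangle _ _ _
      simp only [hSdef, Set.mem_setOf_eq]
      nlinarith [hlam0.le]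
    -- hence u y ≤ u x + 1/(n+1) for all n
    have hkey : ∀ n : ℕ, u y ≤ u x + 1 / (n + 1) := by
      intro n
      have h1 : u y ≤ sSup (u '' S (seq n)) :=
        le_csSup (hSbdd (seq n)) ⟨y, hyS n, rfl⟩
      have h2 := (hseq_succ n).2
      have h3 := hux (n + 1)
      linarith
    have hyx : u y ≤ u x := by
      have : Filter.Tendsto (fun n : ℕ => u x + 1 / (n + 1)) Filter.atTop
          (nhds (u x + 0)) :=
        tendsto_const_nhds.add tendsto_one_div_add_atTop_nhds_zero_nat
      have := ge_of_tendsto' (by simpa using this) hkey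
      linarith
    nlinarith [dist_nonneg (x := x) (y := y), hlam0.le]
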